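/- arXiv:2601.22073 — 3 statements merged into one kernel-verified Lean document; each statement's English description precedes it below -/
import Mathlib

section
/- Let f ∈ L¹(0,T) and g ∈ L^∞(0,T) be real-valued, g₀ ∈ ℝ. Suppose that for all nonnegative φ ∈ C¹_c([0,T)) one has −∫₀ᵀ φ'(τ) g(τ) dτ + ∫₀ᵀ φ(τ) f(τ) dτ − φ(0) g₀ ≤ 0. Then for almost every s < t in (0,T) (and also for s = 0 with g(s) replaced by g₀) it holds g(t) − g(s) + ∫ₛᵗ f(τ) dτ ≤ 0. -/
open MeasureTheory Real Set Filter Metric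
open scoped Topology

local notation "ψ" => Real.smoothTransition

theorem d_zero {x : ℝ} (hx : x < 0 ∨ 1 < x) : deriv ψ x = 0 := by
  have h : (ψ : ℝ → ℝ) =ᶠ[𝓝 x] fun _ => (if 1 < x then 1 else 0 : ℝ) := by
    rcases hx with hx | hx
    · filter_upwards [Iio_mem_nhds hx] with y hy
      simp [Real.smoothTransition.zero_of_nonpos (le_of_lt hy), if_neg (by linarith : ¬ (1:ℝ) < x)]
    · filter_upwards [Ioi_mem_nhds hx] with y hy
      simp [Real.smoothTransition.one_of_one_le (le_of_lt hy), if_pos hx]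
  rw [h.deriv_eq, deriv_const]

theorem psi_hasDeriv (x : ℝ) : HasDerivAt ψ (deriv ψ x) x :=
  (((Real.smoothTransition.contDiff (n := 1)).differentiable one_ne_zero) x).hasDerivAt

theorem d_cont : Continuous (deriv ψ) :=
  (Real.smoothTransition.contDiff (n := 1)).continuous_deriv le_rfl

theorem d_bound : ∃ C : ℝ, 0 ≤ C ∧ ∀ x, |deriv ψ x| ≤ C := by
  have hcs : HasCompactSupport (deriv ψ) := by
    refine HasCompactSupport.intro (isCompact_Icc (a := (0:ℝ)) (b := 1)) (fun x hx => d_zero ?_)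
    simp only [mem_Icc, not_and_or, not_le] at hx
    tauto
  obtain ⟨C, hC⟩ := hcs.exists_bound_of_continuous d_cont
  exact ⟨max C 0, le_max_right _ _, fun x => le_max_of_le_left (hC x)⟩

theorem d_int : ∫ x, deriv ψ x = 1 := by
  have hsupp : Function.support (deriv ψ) ⊆ Ioc (-1 : ℝ) 2 := by
    intro x hx
    by_contra hmem
    simp only [mem_Ioc, not_and_or, not_lt, not_le] at hmem
    refine hx (d_zero ?_)
    rcases hmem with h | h
    · left; linarith
    · right; linarith
  rw [← intervalIntegral.integral_eq_integral_of_support_subset hsupp,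
    intervalIntegral.integral_deriv_eq_sub (fun x _ => (psi_hasDeriv x).differentiableAt)
      (d_cont.intervalIntegrable _ _)]
  rw [Real.smoothTransition.one_of_one_le (by norm_num),
    Real.smoothTransition.zero_of_nonpos (by norm_num)]
  norm_num

theorem kernel_int {ε : ℝ} (hε : 0 < ε) (a : ℝ) :
    ∫ τ : ℝ, ε⁻¹ * deriv ψ ((τ - a) / ε) = 1 := by
  rw [integral_const_mul]
  have h1 : ∫ τ : ℝ, deriv ψ ((τ - a) / ε) = ∫ τ : ℝ, deriv ψ (τ / ε) :=
    integral_sub_right_eq_self (fun y => deriv ψ (y / ε)) a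
  rw [h1, Measure.integral_comp_div (deriv ψ) ε, d_int, abs_of_pos hε]
  simp [inv_mul_cancel₀ (ne_of_gt hε)]

theorem kernel_cont (ε a : ℝ) :
    Continuous (fun τ : ℝ => ε⁻¹ * deriv ψ ((τ - a)/ε)) :=
  continuous_const.mul (d_cont.comp ((continuous_id.sub continuous_const).div_const ε))

theorem kernel_supp {ε : ℝ} (hε : 0 < ε) (a : ℝ) {τ : ℝ} (hτ : τ ∉ Icc a (a + ε)) :
    ε⁻¹ * deriv ψ ((τ - a)/ε) = 0 := by
  simp only [mem_Icc, not_and_or, not_le] at hτ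
  rcases hτ with h | h
  · rw [d_zero (Or.inl (div_neg_of_neg_of_pos (by linarith) hε)), mul_zero]
  · rw [d_zero (Or.inr ((one_lt_div hε).mpr (by linarith))), mul_zero]

theorem kernel_bd {ε : ℝ} (hε : 0 < ε) {C : ℝ} (hC : ∀ x, |deriv ψ x| ≤ C) (a τ : ℝ) :
    ‖ε⁻¹ * deriv ψ ((τ - a)/ε)‖ ≤ ε⁻¹ * C := by
  rw [Real.norm_eq_abs, abs_mul, abs_of_pos (inv_pos.mpr hε)]
  exact mul_le_mul_of_nonneg_left (hC _) (le_of_lt (inv_pos.mpr hε))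

theorem kg_int {T : ℝ} {g : ℝ → ℝ} (hg : IntegrableOn g (Set.Ioo 0 T))
    {ε : ℝ} (hε : 0 < ε) {C : ℝ} (hC : ∀ x, |deriv ψ x| ≤ C) (a : ℝ) :
    IntegrableOn (fun τ => ε⁻¹ * deriv ψ ((τ - a)/ε) * g τ) (Set.Ioo 0 T) :=
  hg.bdd_mul (kernel_cont ε a).aestronglyMeasurable (Eventually.of_forall fun τ => kernel_bd hε hC a τ)

theorem kernel_tendsto {T : ℝ} {g : ℝ → ℝ} (hg : IntegrableOn g (Set.Ioo 0 T))
    {x : ℝ} (hx : x ∈ Set.Ioo 0 T)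
    (hleb : Tendsto (fun ε => ⨍ y in closedBall x ε,
        ‖(Set.Ioo 0 T).indicator g y - (Set.Ioo 0 T).indicator g x‖) (𝓝[>] (0:ℝ)) (𝓝 0)) :
    Tendsto (fun ε => ∫ τ in Set.Ioo 0 T, ε⁻¹ * deriv ψ ((τ - x)/ε) * g τ)
      (𝓝[>] (0:ℝ)) (𝓝 (g x)) := by
  obtain ⟨C, hC0, hC⟩ := d_bound
  set G := (Set.Ioo 0 T).indicator g with hGdef
  have hGx : G x = g x := indicator_of_mem hx g
  rw [tendsto_iff_norm_sub_tendsto_zero]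
  have key : ∀ᶠ ε in 𝓝[>] (0:ℝ),
      ‖(∫ τ in Set.Ioo 0 T, ε⁻¹ * deriv ψ ((τ - x)/ε) * g τ) - g x‖
        ≤ (2*C) * ⨍ y in closedBall x ε, ‖G y - G x‖ := by
    have hδ : (0:ℝ) < min x (T - x) := lt_min hx.1 (by linarith [hx.2])
    filter_upwards [Ioo_mem_nhdsGT hδ] with ε hε
    obtain ⟨hε0, hεδ⟩ := hε
    have hεx : ε < x := lt_of_lt_of_le hεδ (min_le_left _ _)
    have hεT : ε < T - x := lt_of_lt_of_le hεδ (min_le_right _ _)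
    set k : ℝ → ℝ := fun τ => ε⁻¹ * deriv ψ ((τ - x)/ε) with hk
    have hcb : closedBall x ε ⊆ Set.Ioo 0 T := by
      intro y hy
      rw [Real.closedBall_eq_Icc] at hy
      exact ⟨by linarith [hy.1], by linarith [hy.2]⟩
    have hIcc_cb : Icc x (x + ε) ⊆ closedBall x ε := by
      rw [Real.closedBall_eq_Icc]; exact Icc_subset_Icc (by linarith) le_rfl
    have hint1 : ∫ τ in Set.Ioo 0 T, k τ = 1 := by
      rw [setIntegral_eq_integral_of_forall_compl_eq_zero
        (fun τ hτ => kernel_supp hε0 x (fun hmem => hτ (hcb (hIcc_cb hmem))))]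
      exact kernel_int hε0 x
    have hkInt : IntegrableOn k (Set.Ioo 0 T) :=
      (((kernel_cont ε x).integrable_of_hasCompactSupport
        (HasCompactSupport.intro (isCompact_Icc (a := x) (b := x + ε))
          (fun τ hτ => kernel_supp hε0 x hτ)))).integrableOn
    have hkg : IntegrableOn (fun τ => k τ * g τ) (Set.Ioo 0 T) :=
      hg.bdd_mul (kernel_cont ε x).aestronglyMeasurable
        (Eventually.of_forall fun τ => kernel_bd hε0 hC x τ)
    have heq : (∫ τ in Set.Ioo 0 T, k τ * g τ) - g x
        = ∫ τ in Set.Ioo 0 T, k τ * (g τ - g x) := by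
      have : (fun τ => k τ * (g τ - g x)) = fun τ => k τ * g τ - k τ * g x := by
        funext τ; ring
      rw [this, integral_sub hkg (hkInt.mul_const (g x)), integral_mul_const, hint1, one_mul]
    rw [heq]
    have hnormInt : IntegrableOn (fun τ => ‖g τ - g x‖) (Set.Ioo 0 T) :=
      (hg.sub (integrableOn_const measure_Ioo_lt_top.ne)).norm
    have hbdInt : Integrable
        (fun τ => (ε⁻¹ * C) * (closedBall x ε).indicator (fun y => ‖g y - g x‖) τ)
        (volume.restrict (Set.Ioo 0 T)) :=
      ((hnormInt.indicator measurableSet_closedBall).const_mul _)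
    have hb : ‖∫ τ in Set.Ioo 0 T, k τ * (g τ - g x)‖
        ≤ ∫ τ in Set.Ioo 0 T, (ε⁻¹ * C) * (closedBall x ε).indicator (fun y => ‖g y - g x‖) τ := by
      refine norm_integral_le_of_norm_le hbdInt (Eventually.of_forall fun τ => ?_)
      by_cases hτ : τ ∈ closedBall x ε
      · rw [indicator_of_mem hτ, norm_mul]
        exact mul_le_mul (kernel_bd hε0 hC x τ) (le_refl _) (norm_nonneg _) (by positivity)
      · have hk0 : k τ = 0 := kernel_supp hε0 x (fun hmem => hτ (hIcc_cb hmem))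
        rw [indicator_of_notMem hτ, mul_zero, hk0, zero_mul, norm_zero]
    have hcalc : ∫ τ in Set.Ioo 0 T, (ε⁻¹ * C) * (closedBall x ε).indicator (fun y => ‖g y - g x‖) τ
        = (2*C) * ⨍ y in closedBall x ε, ‖G y - G x‖ := by
      rw [integral_const_mul, integral_indicator measurableSet_closedBall,
        Measure.restrict_restrict measurableSet_closedBall,
        inter_eq_left.mpr hcb]
      have hcong : ∫ y in closedBall x ε, ‖g y - g x‖ = ∫ y in closedBall x ε, ‖G y - G x‖ := by
        refine setIntegral_congr_fun measurableSet_closedBall (fun y hy => ?_)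
        rw [hGx, hGdef, indicator_of_mem (hcb hy) g]
      rw [hcong, setAverage_eq, Real.volume_real_closedBall (by linarith),
        smul_eq_mul]
      field_simp
    calc ‖∫ τ in Set.Ioo 0 T, k τ * (g τ - g x)‖ ≤ _ := hb
      _ = _ := hcalc
  have hlim : Tendsto (fun ε => (2*C) * ⨍ y in closedBall x ε, ‖G y - G x‖)
      (𝓝[>] (0:ℝ)) (𝓝 0) := by
    have := hleb.const_mul (2*C)
    simpa using this
  exact squeeze_zero' (Eventually.of_forall fun ε => norm_nonneg _) key hlim

theorem d_ne_zero {x : ℝ} (hx : deriv ψ x ≠ 0) : 0 ≤ x ∧ x ≤ 1 := by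
  constructor
  · by_contra hc; exact hx (d_zero (Or.inl (by linarith [not_le.mp hc])))
  · by_contra hc; exact hx (d_zero (Or.inr (by linarith [not_le.mp hc])))

theorem comp_hasDerivAt (a : ℝ) {ε : ℝ} (hε : ε ≠ 0) (τ : ℝ) :
    HasDerivAt (fun τ => ψ ((τ - a)/ε)) (ε⁻¹ * deriv ψ ((τ - a)/ε)) τ := by
  have hin : HasDerivAt (fun τ : ℝ => (τ - a)/ε) (1/ε) τ := by
    simpa using ((hasDerivAt_id τ).sub_const a).div_const ε
  have hψ : HasDerivAt (fun y => ψ y) (deriv ψ ((τ - a)/ε)) ((τ - a)/ε) :=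
    (((Real.smoothTransition.contDiff (n := 1)).differentiable one_ne_zero) _).hasDerivAt
  have := hψ.comp τ hin
  simpa [Function.comp_def, mul_comm, one_div] using this

theorem comp_contDiff (a : ℝ) (ε : ℝ) : ContDiff ℝ 1 (fun τ => ψ ((τ - a)/ε)) :=
  (Real.smoothTransition.contDiff (n := 1)).comp ((contDiff_id.sub contDiff_const).div_const ε)

theorem plateau_hasDeriv (s t : ℝ) {ε : ℝ} (hε : 0 < ε) (τ : ℝ) :
    HasDerivAt (fun τ => ψ ((τ - s)/ε) * (1 - ψ ((τ - t)/ε)))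
      (ε⁻¹ * deriv ψ ((τ - s)/ε) * (1 - ψ ((τ - t)/ε))
        + ψ ((τ - s)/ε) * -(ε⁻¹ * deriv ψ ((τ - t)/ε))) τ :=
  (comp_hasDerivAt s hε.ne' τ).mul ((comp_hasDerivAt t hε.ne' τ).const_sub 1)

theorem plateau_deriv (s t : ℝ) {ε : ℝ} (hε : 0 < ε) (hst : s + ε ≤ t) (τ : ℝ) :
    deriv (fun τ => ψ ((τ - s)/ε) * (1 - ψ ((τ - t)/ε))) τ
      = ε⁻¹ * deriv ψ ((τ - s)/ε) - ε⁻¹ * deriv ψ ((τ - t)/ε) := by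
  rw [(plateau_hasDeriv s t hε τ).deriv]
  by_cases hA : deriv ψ ((τ - s)/ε) = 0
  · by_cases hD : deriv ψ ((τ - t)/ε) = 0
    · rw [hA, hD]; ring
    · obtain ⟨h0, h1⟩ := d_ne_zero hD
      have hτt : t ≤ τ := by
        rcases div_nonneg_iff.mp h0 with ⟨h, _⟩ | ⟨_, h⟩
        · linarith
        · linarith
      have : (1:ℝ) ≤ (τ - s)/ε := (one_le_div hε).mpr (by linarith)
      rw [hA, Real.smoothTransition.one_of_one_le this]
      ring
  · obtain ⟨h0, h1⟩ := d_ne_zero hA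
    have hτ1 : τ ≤ s + ε := by
      have := (div_le_one hε).mp h1
      linarith
    have hψt : ψ ((τ - t)/ε) = 0 :=
      Real.smoothTransition.zero_of_nonpos (div_nonpos_of_nonpos_of_nonneg (by linarith) hε.le)
    by_cases hD : deriv ψ ((τ - t)/ε) = 0
    · rw [hD, hψt]; ring
    · obtain ⟨h0', h1'⟩ := d_ne_zero hD
      have hτt : t ≤ τ := by
        rcases div_nonneg_iff.mp h0' with ⟨h, _⟩ | ⟨_, h⟩
        · linarith
        · linarith
      have : (1:ℝ) ≤ (τ - s)/ε := (one_le_div hε).mpr (by linarith)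
      rw [hψt, Real.smoothTransition.one_of_one_le this]
      ring

theorem plateau_nonneg (s t : ℝ) (ε : ℝ) (τ : ℝ) :
    0 ≤ ψ ((τ - s)/ε) * (1 - ψ ((τ - t)/ε)) :=
  mul_nonneg (Real.smoothTransition.nonneg _)
    (by linarith [Real.smoothTransition.le_one ((τ - t)/ε)])

theorem plateau_vanish (s t : ℝ) {ε : ℝ} (hε : 0 < ε) {τ : ℝ} (hτ : t + ε ≤ τ) :
    ψ ((τ - s)/ε) * (1 - ψ ((τ - t)/ε)) = 0 := by
  have : (1:ℝ) ≤ (τ - t)/ε := (one_le_div hε).mpr (by linarith)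
  rw [Real.smoothTransition.one_of_one_le this]; ring

theorem plateau_zero (s t : ℝ) {ε : ℝ} (hε : 0 < ε) (hs : 0 < s) :
    ψ ((0 - s)/ε) * (1 - ψ ((0 - t)/ε)) = 0 := by
  rw [Real.smoothTransition.zero_of_nonpos
    (div_nonpos_of_nonpos_of_nonneg (by linarith) hε.le), zero_mul]

theorem ae_ne {T s t : ℝ} :
    ∀ᵐ τ ∂(volume.restrict (Set.Ioo 0 T)), τ ≠ s ∧ τ ≠ t := by
  refine ae_restrict_of_ae ?_
  have h0 : volume ({s, t} : Set ℝ) = 0 := ((Set.finite_singleton t).insert s).measure_zero _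
  filter_upwards [measure_eq_zero_iff_ae_notMem.mp h0] with τ hτ
  simp only [Set.mem_insert_iff, Set.mem_singleton_iff] at hτ
  push_neg at hτ
  exact hτ

theorem f_tendsto1 {T s t : ℝ} {f : ℝ → ℝ} (hf : IntegrableOn f (Set.Ioo 0 T))
    (hs : s ∈ Set.Ioo 0 T) (ht : t ∈ Set.Ioo 0 T) :
    Tendsto (fun ε => ∫ τ in Set.Ioo 0 T, ψ ((τ - s)/ε) * (1 - ψ ((τ - t)/ε)) * f τ)
      (𝓝[>] (0:ℝ)) (𝓝 (∫ τ in Set.Ioo s t, f τ)) := by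
  have hsub : Set.Ioo s t ⊆ Set.Ioo 0 T := Set.Ioo_subset_Ioo hs.1.le ht.2.le
  have htarget : (∫ τ in Set.Ioo s t, f τ)
      = ∫ τ in Set.Ioo 0 T, (Set.Ioo s t).indicator f τ := by
    rw [integral_indicator measurableSet_Ioo,
      Measure.restrict_restrict measurableSet_Ioo, Set.inter_eq_left.mpr hsub]
  rw [htarget]
  refine tendsto_integral_filter_of_dominated_convergence (fun τ => ‖f τ‖)
    (Eventually.of_forall fun ε => ?_) (Eventually.of_forall fun ε => ?_) hf.norm ?_
  · exact ((Real.smoothTransition.continuous.comp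
        ((continuous_id.sub continuous_const).div_const ε)).mul
      (continuous_const.sub (Real.smoothTransition.continuous.comp
        ((continuous_id.sub continuous_const).div_const ε)))).aestronglyMeasurable.mul
      hf.aestronglyMeasurable
  · refine Eventually.of_forall fun τ => ?_
    rw [norm_mul]
    have h1 : ψ ((τ - s)/ε) * (1 - ψ ((τ - t)/ε)) ≤ 1 :=
      mul_le_one₀ (Real.smoothTransition.le_one _)
        (by linarith [Real.smoothTransition.nonneg ((τ - t)/ε), Real.smoothTransition.le_one ((τ - t)/ε)])
        (by linarith [Real.smoothTransition.nonneg ((τ - t)/ε), Real.smoothTransition.le_one ((τ - t)/ε)])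
    have h0 : 0 ≤ ψ ((τ - s)/ε) * (1 - ψ ((τ - t)/ε)) :=
      mul_nonneg (Real.smoothTransition.nonneg _)
        (by linarith [Real.smoothTransition.le_one ((τ - t)/ε)])
    calc ‖ψ ((τ - s)/ε) * (1 - ψ ((τ - t)/ε))‖ * ‖f τ‖
        ≤ 1 * ‖f τ‖ := by
          refine mul_le_mul_of_nonneg_right ?_ (norm_nonneg _)
          rw [Real.norm_eq_abs, abs_of_nonneg h0]; exact h1
      _ = ‖f τ‖ := one_mul _
  · filter_upwards [ae_ne (s := s) (t := t)] with τ hτ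
    rcases lt_trichotomy τ s with hlt | heq | hgt
    · have hind : (Set.Ioo s t).indicator f τ = 0 :=
        Set.indicator_of_notMem (fun hmem => absurd hmem.1 (not_lt.mpr hlt.le)) f
      rw [hind]
      refine Tendsto.congr' ?_ tendsto_const_nhds
      filter_upwards [self_mem_nhdsWithin] with ε hε
      have : ψ ((τ - s)/ε) = 0 := Real.smoothTransition.zero_of_nonpos
        (div_nonpos_of_nonpos_of_nonneg (by linarith) (le_of_lt hε))
      simp [this]
    · exact absurd heq hτ.1
    · rcases lt_trichotomy τ t with hlt2 | heq2 | hgt2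
      · have hind : (Set.Ioo s t).indicator f τ = f τ :=
          Set.indicator_of_mem (Set.mem_Ioo.mpr ⟨hgt, hlt2⟩) f
        rw [hind]
        refine Tendsto.congr' ?_ tendsto_const_nhds
        have hδ : (0:ℝ) < min (τ - s) (t - τ) := lt_min (by linarith) (by linarith)
        filter_upwards [Ioo_mem_nhdsGT hδ] with ε hε
        have h1 : ψ ((τ - s)/ε) = 1 := Real.smoothTransition.one_of_one_le
          ((one_le_div hε.1).mpr (le_of_lt (lt_of_lt_of_le hε.2 (min_le_left _ _))))
        have h2 : ψ ((τ - t)/ε) = 0 := Real.smoothTransition.zero_of_nonpos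
          (div_nonpos_of_nonpos_of_nonneg (by linarith) (le_of_lt hε.1))
        simp [h1, h2]
      · exact absurd heq2 hτ.2
      · have hind : (Set.Ioo s t).indicator f τ = 0 :=
          Set.indicator_of_notMem (fun hmem => absurd hmem.2 (not_lt.mpr hgt2.le)) f
        rw [hind]
        refine Tendsto.congr' ?_ tendsto_const_nhds
        filter_upwards [Ioo_mem_nhdsGT (by linarith : (0:ℝ) < τ - t)] with ε hε
        have h2 : ψ ((τ - t)/ε) = 1 := Real.smoothTransition.one_of_one_le
          ((one_le_div hε.1).mpr (le_of_lt hε.2))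
        simp [h2]

theorem f_tendsto2 {T t : ℝ} {f : ℝ → ℝ} (hf : IntegrableOn f (Set.Ioo 0 T))
    (ht : t ∈ Set.Ioo 0 T) :
    Tendsto (fun ε => ∫ τ in Set.Ioo 0 T, (1 - ψ ((τ - t)/ε)) * f τ)
      (𝓝[>] (0:ℝ)) (𝓝 (∫ τ in Set.Ioo 0 t, f τ)) := by
  have hsub : Set.Ioo 0 t ⊆ Set.Ioo 0 T := Set.Ioo_subset_Ioo le_rfl ht.2.le
  have htarget : (∫ τ in Set.Ioo 0 t, f τ)
      = ∫ τ in Set.Ioo 0 T, (Set.Ioo 0 t).indicator f τ := by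
    rw [integral_indicator measurableSet_Ioo,
      Measure.restrict_restrict measurableSet_Ioo, Set.inter_eq_left.mpr hsub]
  rw [htarget]
  refine tendsto_integral_filter_of_dominated_convergence (fun τ => ‖f τ‖)
    (Eventually.of_forall fun ε => ?_) (Eventually.of_forall fun ε => ?_) hf.norm ?_
  · exact ((continuous_const.sub (Real.smoothTransition.continuous.comp
        ((continuous_id.sub continuous_const).div_const ε)))).aestronglyMeasurable.mul
      hf.aestronglyMeasurable
  · refine Eventually.of_forall fun τ => ?_
    rw [norm_mul]
    have h0 : (0:ℝ) ≤ 1 - ψ ((τ - t)/ε) := by linarith [Real.smoothTransition.le_one ((τ - t)/ε)]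
    have h1 : 1 - ψ ((τ - t)/ε) ≤ 1 := by linarith [Real.smoothTransition.nonneg ((τ - t)/ε)]
    calc ‖1 - ψ ((τ - t)/ε)‖ * ‖f τ‖ ≤ 1 * ‖f τ‖ := by
          rw [Real.norm_eq_abs, abs_of_nonneg h0]
          exact mul_le_mul_of_nonneg_right h1 (norm_nonneg _)
      _ = ‖f τ‖ := one_mul _
  · have hmemIoo : ∀ᵐ τ ∂(volume.restrict (Set.Ioo 0 T)), τ ∈ Set.Ioo 0 T :=
      ae_restrict_mem measurableSet_Ioo
    filter_upwards [ae_ne (s := t) (t := t), hmemIoo] with τ hτ hτIoo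
    rcases lt_trichotomy τ t with hlt | heq | hgt
    · have hind : (Set.Ioo 0 t).indicator f τ = f τ :=
        Set.indicator_of_mem (Set.mem_Ioo.mpr ⟨hτIoo.1, hlt⟩) f
      rw [hind]
      refine Tendsto.congr' ?_ tendsto_const_nhds
      filter_upwards [self_mem_nhdsWithin] with ε hε
      have h2 : ψ ((τ - t)/ε) = 0 := Real.smoothTransition.zero_of_nonpos
        (div_nonpos_of_nonpos_of_nonneg (by linarith) (le_of_lt hε))
      simp [h2]
    · exact absurd heq hτ.1
    · have hind : (Set.Ioo 0 t).indicator f τ = 0 :=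
        Set.indicator_of_notMem (fun hmem => absurd hmem.2 (not_lt.mpr hgt.le)) f
      rw [hind]
      refine Tendsto.congr' ?_ tendsto_const_nhds
      filter_upwards [Ioo_mem_nhdsGT (by linarith : (0:ℝ) < τ - t)] with ε hε
      have h2 : ψ ((τ - t)/ε) = 1 := Real.smoothTransition.one_of_one_le
        ((one_le_div hε.1).mpr (le_of_lt hε.2))
      simp [h2]

theorem lebpt (G : ℝ → ℝ) (hG : LocallyIntegrable G volume) :
    ∀ᵐ x, Tendsto (fun ε => ⨍ y in closedBall x ε, ‖G y - G x‖) (𝓝[>] (0:ℝ)) (𝓝 0) := by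
  filter_upwards [IsUnifLocDoublingMeasure.ae_tendsto_average_norm_sub volume hG 1] with x hx
  refine hx (fun _ => x) id tendsto_id ?_
  filter_upwards [self_mem_nhdsWithin] with ε hε
  show x ∈ Metric.closedBall x (1 * id ε)
  rw [Metric.mem_closedBall, dist_self]
  have : (0:ℝ) < ε := hε
  simp only [id]; linarith

/-- Deterministic Lemma 2.1, direction i ⇒ ii: if the variational inequality
`-∫ φ' g + ∫ φ f - φ(0) g₀ ≤ 0` holds for all nonnegative `φ ∈ C¹_c([0,T))`, then for
almost every `s < t` in `(0,T)` (and for `s = 0` with `g(0)` replaced by `g₀`) one has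
`g(t) - g(s) + ∫ₛᵗ f ≤ 0`. -/
theorem stmt6 (T : ℝ) (hT : 0 < T) (f g : ℝ → ℝ) (g₀ : ℝ)
    (hf : IntegrableOn f (Set.Ioo 0 T))
    (M : ℝ) (hgb : ∀ᵐ t ∂(volume.restrict (Set.Ioo 0 T)), |g t| ≤ M)
    (hgm : AEStronglyMeasurable g (volume.restrict (Set.Ioo 0 T)))
    (h : ∀ φ : ℝ → ℝ, ContDiff ℝ 1 φ → (∀ t, 0 ≤ φ t) →
      (∃ T', T' < T ∧ ∀ t, T' ≤ t → φ t = 0) →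
      -(∫ t in Set.Ioo 0 T, deriv φ t * g t) + (∫ t in Set.Ioo 0 T, φ t * f t)
        - φ 0 * g₀ ≤ 0) :
    ∃ S : Set ℝ, S ⊆ Set.Ioo 0 T ∧ volume (Set.Ioo 0 T \ S) = 0 ∧
      (∀ s ∈ S, ∀ t ∈ S, s < t → g t - g s + ∫ τ in Set.Ioo s t, f τ ≤ 0) ∧
      (∀ t ∈ S, g t - g₀ + ∫ τ in Set.Ioo 0 t, f τ ≤ 0) := by
  obtain ⟨C, hC0, hC⟩ := d_bound
  have hgI : IntegrableOn g (Set.Ioo 0 T) := by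
    refine Integrable.mono' (integrableOn_const (C := M) measure_Ioo_lt_top.ne) hgm ?_
    filter_upwards [hgb] with τ hτ
    rwa [Real.norm_eq_abs]
  set G := (Set.Ioo 0 T).indicator g with hGdef
  have hGint : Integrable G := (integrable_indicator_iff measurableSet_Ioo).mpr hgI
  set S := {x | x ∈ Set.Ioo 0 T ∧
    Tendsto (fun ε => ⨍ y in closedBall x ε, ‖G y - G x‖) (𝓝[>] (0:ℝ)) (𝓝 0)} with hSdef
  refine ⟨S, fun x hx => hx.1, ?_, ?_, ?_⟩
  · -- measure zero complement
    have hae := lebpt G hGint.locallyIntegrable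
    refine measure_mono_null ?_ (ae_iff.mp hae)
    intro x hx
    simp only [Set.mem_diff, hSdef, Set.mem_setOf_eq] at hx
    exact fun hcont => hx.2 ⟨hx.1, hcont⟩
  · -- interior case s < t
    intro s hsS t htS hst
    obtain ⟨hs, hlebs⟩ := hsS
    obtain ⟨ht, hlebt⟩ := htS
    have hKs := kernel_tendsto hgI hs hlebs
    have hKt := kernel_tendsto hgI ht hlebt
    have hF := f_tendsto1 hf hs ht
    have hlim : Tendsto (fun ε =>
        -((∫ τ in Set.Ioo 0 T, ε⁻¹ * deriv ψ ((τ - s)/ε) * g τ)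
          - (∫ τ in Set.Ioo 0 T, ε⁻¹ * deriv ψ ((τ - t)/ε) * g τ))
        + (∫ τ in Set.Ioo 0 T, ψ ((τ - s)/ε) * (1 - ψ ((τ - t)/ε)) * f τ)) (𝓝[>] (0:ℝ))
        (𝓝 (-(g s - g t) + ∫ τ in Set.Ioo s t, f τ)) :=
      ((hKs.sub hKt).neg).add hF
    have hineq : ∀ᶠ ε in 𝓝[>] (0:ℝ),
        -((∫ τ in Set.Ioo 0 T, ε⁻¹ * deriv ψ ((τ - s)/ε) * g τ)
          - (∫ τ in Set.Ioo 0 T, ε⁻¹ * deriv ψ ((τ - t)/ε) * g τ))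
        + (∫ τ in Set.Ioo 0 T, ψ ((τ - s)/ε) * (1 - ψ ((τ - t)/ε)) * f τ) ≤ 0 := by
      have hδ : (0:ℝ) < min (t - s) (T - t) := lt_min (by linarith) (by linarith [ht.2])
      filter_upwards [Ioo_mem_nhdsGT hδ] with ε hε
      obtain ⟨hε0, hεδ⟩ := hε
      have hεts : ε ≤ t - s := le_of_lt (lt_of_lt_of_le hεδ (min_le_left _ _))
      have hεT : ε < T - t := lt_of_lt_of_le hεδ (min_le_right _ _)
      have happ := h (fun τ => ψ ((τ - s)/ε) * (1 - ψ ((τ - t)/ε)))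
        ((comp_contDiff s ε).mul (contDiff_const.sub (comp_contDiff t ε)))
        (plateau_nonneg s t ε)
        ⟨t + ε, by linarith, fun τ hτ => plateau_vanish s t hε0 hτ⟩
      have hdereq : (fun τ => deriv (fun τ => ψ ((τ - s)/ε) * (1 - ψ ((τ - t)/ε))) τ * g τ)
          = fun τ => ε⁻¹ * deriv ψ ((τ - s)/ε) * g τ - ε⁻¹ * deriv ψ ((τ - t)/ε) * g τ := by
        funext τ
        rw [plateau_deriv s t hε0 (by linarith) τ]
        ring
      rw [hdereq] at happ
      rw [integral_sub (kg_int hgI hε0 hC s) (kg_int hgI hε0 hC t)] at happ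
      have hzero : ψ ((0 - s)/ε) * (1 - ψ ((0 - t)/ε)) = 0 := plateau_zero s t hε0 hs.1
      simp only [hzero, zero_mul, sub_zero] at happ
      linarith
    have hfinal := le_of_tendsto hlim hineq
    linarith
  · -- boundary case s = 0
    intro t htS
    obtain ⟨ht, hlebt⟩ := htS
    have hKt := kernel_tendsto hgI ht hlebt
    have hF := f_tendsto2 hf ht
    have hlim : Tendsto (fun ε =>
        (∫ τ in Set.Ioo 0 T, ε⁻¹ * deriv ψ ((τ - t)/ε) * g τ)
        + (∫ τ in Set.Ioo 0 T, (1 - ψ ((τ - t)/ε)) * f τ) - g₀) (𝓝[>] (0:ℝ))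
        (𝓝 (g t + (∫ τ in Set.Ioo 0 t, f τ) - g₀)) :=
      (hKt.add hF).sub_const g₀
    have hineq : ∀ᶠ ε in 𝓝[>] (0:ℝ),
        (∫ τ in Set.Ioo 0 T, ε⁻¹ * deriv ψ ((τ - t)/ε) * g τ)
        + (∫ τ in Set.Ioo 0 T, (1 - ψ ((τ - t)/ε)) * f τ) - g₀ ≤ 0 := by
      have hδ : (0:ℝ) < T - t := by linarith [ht.2]
      filter_upwards [Ioo_mem_nhdsGT hδ] with ε hε
      obtain ⟨hε0, hεT⟩ := hε
      have happ := h (fun τ => 1 - ψ ((τ - t)/ε))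
        (contDiff_const.sub (comp_contDiff t ε))
        (fun τ => by linarith [Real.smoothTransition.le_one ((τ - t)/ε)])
        ⟨t + ε, by linarith, fun τ hτ => by
          show (1:ℝ) - ψ ((τ - t)/ε) = 0
          rw [Real.smoothTransition.one_of_one_le ((one_le_div hε0).mpr (by linarith))]
          ring⟩
      have hdereq : (fun τ => deriv (fun τ => 1 - ψ ((τ - t)/ε)) τ * g τ)
          = fun τ => -(ε⁻¹ * deriv ψ ((τ - t)/ε) * g τ) := by
        funext τ
        rw [((comp_hasDerivAt t hε0.ne' τ).const_sub 1).deriv]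
        ring
      rw [hdereq, integral_neg] at happ
      have hzero : (1:ℝ) - ψ ((0 - t)/ε) = 1 := by
        rw [Real.smoothTransition.zero_of_nonpos
          (div_nonpos_of_nonpos_of_nonneg (by linarith [ht.1]) hε0.le)]
        ring
      simp only [hzero, one_mul, neg_neg] at happ
      linarith
    have hfinal := le_of_tendsto hlim hineq
    linarith
end

section
/- Let f ∈ L¹(0,T) and g ∈ L^∞(0,T), g₀ ∈ ℝ. Suppose g(t) − g(s) + ∫ₛᵗ f(τ) dτ ≤ 0 holds for almost every 0 < s < t < T and also for s = 0 with g(0) replaced by g₀. Then for all nonnegative φ ∈ C¹_c([0,T)): −∫₀ᵀ φ'(τ) g(τ) dτ + ∫₀ᵀ φ(τ) f(τ) dτ − φ(0) g₀ ≤ 0. -/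
open MeasureTheory Set

lemma aux_ftc {φ : ℝ → ℝ} (hφ : ContDiff ℝ 1 φ) {a b : ℝ} (hab : a ≤ b) :
    ∫ t in Set.Ioo a b, deriv φ t = φ b - φ a := by
  rw [← MeasureTheory.integral_Ioc_eq_integral_Ioo, ← intervalIntegral.integral_of_le hab]
  exact intervalIntegral.integral_deriv_eq_sub (fun x _ => (hφ.differentiable one_ne_zero) x)
    (((hφ.continuous_deriv le_rfl)).intervalIntegrable _ _)

lemma aux_upper {φ : ℝ → ℝ} (hφ : ContDiff ℝ 1 φ) (hφ0 : ∀ t, 0 ≤ φ t) {T : ℝ}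
    (hφT : φ T = 0) (U : Set ℝ) (hUsub : U ⊆ Set.Ioo 0 T)
    (hup : ∀ t ∈ U, ∀ t', t < t' → t' < T → t' ∈ U) :
    ∫ t in U, deriv φ t ≤ 0 := by
  rcases U.eq_empty_or_nonempty with h | h
  · simp [h]
  · set c := sInf U with hc
    have hbd : BddBelow U := ⟨0, fun u hu => (hUsub hu).1.le⟩
    have hcT : c ≤ T := by
      obtain ⟨u, hu⟩ := h
      exact le_trans (csInf_le hbd hu) (hUsub hu).2.le
    have hsub1 : Set.Ioo c T ⊆ U := by
      intro t ht
      obtain ⟨u, hu, hut⟩ := (csInf_lt_iff hbd h).1 ht.1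
      exact hup u hu t hut ht.2
    have hae : U =ᵐ[volume] Set.Ioo c T := by
      rw [MeasureTheory.ae_eq_set]
      constructor
      · refine measure_mono_null (fun u hu => ?_) (measure_singleton c)
        rcases hu with ⟨hu1, hu2⟩
        have h1 : c ≤ u := csInf_le hbd hu1
        have h2 : u < T := (hUsub hu1).2
        have : u = c := le_antisymm (not_lt.1 fun hcu => hu2 ⟨hcu, h2⟩) h1
        simp [this]
      · have he : Set.Ioo c T \ U = ∅ := Set.diff_eq_empty.2 hsub1
        simp [he]
    rw [setIntegral_congr_set hae, aux_ftc hφ hcT, hφT]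
    linarith [hφ0 c]

/-- Deterministic Lemma 2.1, direction ii ⇒ i: if `g(t) - g(s) + ∫ₛᵗ f ≤ 0` holds for
almost every `0 < s < t < T` and for `s = 0` with `g₀`, then the variational inequality
holds for all nonnegative `φ ∈ C¹_c([0,T))`. -/
theorem stmt7 (T : ℝ) (hT : 0 < T) (f g : ℝ → ℝ) (g₀ : ℝ)
    (hf : IntegrableOn f (Set.Ioo 0 T))
    (M : ℝ) (hgb : ∀ᵐ t ∂(volume.restrict (Set.Ioo 0 T)), |g t| ≤ M)
    (hgm : AEStronglyMeasurable g (volume.restrict (Set.Ioo 0 T)))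
    (S : Set ℝ) (hS : S ⊆ Set.Ioo 0 T) (hSfull : volume (Set.Ioo 0 T \ S) = 0)
    (hineq : ∀ s ∈ S, ∀ t ∈ S, s < t → g t - g s + ∫ τ in Set.Ioo s t, f τ ≤ 0)
    (hineq0 : ∀ t ∈ S, g t - g₀ + ∫ τ in Set.Ioo 0 t, f τ ≤ 0) :
    ∀ φ : ℝ → ℝ, ContDiff ℝ 1 φ → (∀ t, 0 ≤ φ t) →
      (∃ T', T' < T ∧ ∀ t, T' ≤ t → φ t = 0) →
      -(∫ t in Set.Ioo 0 T, deriv φ t * g t) + (∫ t in Set.Ioo 0 T, φ t * f t)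
        - φ 0 * g₀ ≤ 0 := by
  rintro φ hφ hφ0 ⟨T', hT'T, hT'⟩
  set I : Set ℝ := Set.Ioo 0 T with hIdef
  have hIm : MeasurableSet I := measurableSet_Ioo
  haveI hIfin : IsFiniteMeasure (volume.restrict I) :=
    ⟨by rw [Measure.restrict_apply_univ]; simp [hIdef, Real.volume_Ioo]⟩
  have hφT : φ T = 0 := hT' T hT'T.le
  have hφd : Continuous (deriv φ) := hφ.continuous_deriv le_rfl
  -- bound on deriv φ on [0, T]
  obtain ⟨C, hC0, hC⟩ : ∃ C, 0 ≤ C ∧ ∀ x ∈ Set.Icc (0:ℝ) T, |deriv φ x| ≤ C := by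
    obtain ⟨C, hC⟩ := (isCompact_Icc (a := (0:ℝ)) (b := T)).exists_bound_of_continuousOn
      hφd.continuousOn
    exact ⟨max C 0, le_max_right _ _,
      fun x hx => le_trans (hC x hx) (le_max_left _ _)⟩
  have habs : IntegrableOn (fun τ => |f τ|) I := hf.abs
  set nf : ℝ := ∫ τ in I, |f τ| with hnf
  -- the primitive and the combined function
  set F : ℝ → ℝ := fun t => ∫ τ in Set.Ioo 0 t, f τ with hF
  set G : ℝ → ℝ := fun t => g t + F t with hG
  set S' : Set ℝ := S ∩ {t | |g t| ≤ M} with hS'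
  have hS'sub : S' ⊆ I := fun t ht => hS ht.1
  have hS'null : volume (I \ S') = 0 := by
    have h1 : volume ({t | ¬ |g t| ≤ M} ∩ I) = 0 := by
      have := ae_iff.1 hgb
      rwa [Measure.restrict_apply' hIm] at this
    have h2 : I \ S' ⊆ (I \ S) ∪ ({t | ¬ |g t| ≤ M} ∩ I) := by
      rintro t ⟨htI, htn⟩
      by_cases hts : t ∈ S
      · right
        exact ⟨fun hM => htn ⟨hts, hM⟩, htI⟩
      · exact Or.inl ⟨htI, hts⟩
    exact measure_mono_null h2 (measure_union_null hSfull h1)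
  have hS'ae : ∀ᵐ t ∂(volume.restrict I), t ∈ S' := by
    rw [ae_iff, Measure.restrict_apply' hIm]
    refine measure_mono_null ?_ hS'null
    rintro t ⟨ht1, ht2⟩
    exact ⟨ht2, ht1⟩
  have hne : ∀ t : ℝ, t < T → (S' ∩ Set.Ici t).Nonempty := by
    intro t ht
    by_contra hcon
    rw [Set.not_nonempty_iff_eq_empty] at hcon
    set a : ℝ := max t 0 with ha
    have haT : a < T := max_lt ht hT
    have hsub : Set.Ioo a T ⊆ I \ S' := by
      intro x hx
      have hxI : x ∈ I := ⟨lt_of_le_of_lt (le_max_right t 0) hx.1, hx.2⟩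
      refine ⟨hxI, fun hxS => ?_⟩
      have : x ∈ S' ∩ Set.Ici t := ⟨hxS, le_trans (le_max_left t 0) hx.1.le⟩
      simp [hcon] at this
    have := measure_mono_null hsub hS'null
    rw [Real.volume_Ioo] at this
    exact absurd this (by simp only [ne_eq, ENNReal.ofReal_eq_zero, not_le]; linarith)
  -- additivity of the primitive
  have hFadd : ∀ s ∈ S', ∀ t ∈ S', s < t →
      F t = F s + ∫ τ in Set.Ioo s t, f τ := by
    intro s hs t ht hst
    have hsI := hS'sub hs; have htI := hS'sub ht
    have hu : Set.Ioo 0 s ∪ Set.Ico s t = Set.Ioo 0 t :=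
      Set.Ioo_union_Ico_eq_Ioo hsI.1 hst.le
    have hd : Disjoint (Set.Ioo 0 s) (Set.Ico s t) := by
      rw [Set.disjoint_left]; intro x hx1 hx2; exact absurd hx2.1 (not_le.2 hx1.2)
    have h1 : IntegrableOn f (Set.Ioo 0 s) := hf.mono_set (fun x hx => ⟨hx.1, hx.2.trans hsI.2⟩)
    have h2 : IntegrableOn f (Set.Ico s t) :=
      hf.mono_set (fun x hx => ⟨lt_of_lt_of_le hsI.1 hx.1, hx.2.trans_le htI.2.le⟩)
    calc F t = ∫ τ in Set.Ioo 0 s ∪ Set.Ico s t, f τ := by rw [hu]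
    _ = (∫ τ in Set.Ioo 0 s, f τ) + ∫ τ in Set.Ico s t, f τ :=
        setIntegral_union hd measurableSet_Ico h1 h2
    _ = F s + ∫ τ in Set.Ioo s t, f τ := by rw [MeasureTheory.integral_Ico_eq_integral_Ioo]
  have hGanti : ∀ s ∈ S', ∀ t ∈ S', s < t → G t ≤ G s := by
    intro s hs t ht hst
    have := hineq s hs.1 t ht.1 hst
    have hFa := hFadd s hs t ht hst
    simp only [hG]
    rw [hFa]; linarith
  have hGg0 : ∀ t ∈ S', G t ≤ g₀ := by
    intro t ht
    have := hineq0 t ht.1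
    simp only [hG]; linarith
  set L : ℝ := -M - nf with hL
  have hGL : ∀ t ∈ S', L ≤ G t := by
    intro t ht
    have h1 : -M ≤ g t := neg_le_of_abs_le ht.2
    have h2 : |F t| ≤ nf := by
      have hsub : Set.Ioo 0 t ⊆ I := fun x hx => ⟨hx.1, hx.2.trans (hS'sub ht).2⟩
      calc |F t| ≤ ∫ τ in Set.Ioo 0 t, |f τ| := by
            simpa [Real.norm_eq_abs] using
              norm_integral_le_integral_norm (μ := volume.restrict (Set.Ioo 0 t)) f
      _ ≤ nf := setIntegral_mono_set habs (Filter.Eventually.of_forall fun x => abs_nonneg _)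
            (HasSubset.Subset.eventuallyLE hsub)
    have := neg_le_of_abs_le h2
    simp only [hL, hG]; linarith
  -- the antitone envelope
  have hbdd : ∀ t : ℝ, BddAbove (G '' (S' ∩ Set.Ici t)) := by
    intro t
    exact ⟨g₀, fun y ⟨x, hx, hxy⟩ => hxy ▸ hGg0 x hx.1⟩
  set Gb : ℝ → ℝ := fun t => if t < T then sSup (G '' (S' ∩ Set.Ici t)) else L with hGb
  have hGbval : ∀ t ∈ S', Gb t = G t := by
    intro t ht
    have htT : t < T := (hS'sub ht).2
    simp only [hGb, if_pos htT]
    apply le_antisymm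
    · apply csSup_le ((hne t htT).image G)
      rintro y ⟨x, ⟨hxS, hxt⟩, rfl⟩
      rcases eq_or_lt_of_le (Set.mem_Ici.1 hxt : t ≤ x) with h | h
      · rw [← h]
      · exact hGanti t ht x hxS h
    · exact le_csSup (hbdd t) ⟨t, ⟨ht, le_refl t⟩, rfl⟩
  have hGbL : ∀ t, L ≤ Gb t := by
    intro t
    simp only [hGb]
    split
    · next h =>
      obtain ⟨s, hs⟩ := hne t h
      exact le_trans (hGL s hs.1) (le_csSup (hbdd t) ⟨s, hs, rfl⟩)
    · exact le_refl L
  have hGbg0 : ∀ t, t < T → Gb t ≤ g₀ := by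
    intro t ht
    simp only [hGb, if_pos ht]
    exact csSup_le ((hne t ht).image G) (by rintro y ⟨x, hx, rfl⟩; exact hGg0 x hx.1)
  have hGbanti : Antitone Gb := by
    intro s t hst
    simp only [hGb]
    split
    · next h =>
      rw [if_pos (lt_of_le_of_lt hst h)]
      exact csSup_le_csSup (hbdd s) ((hne t h).image G)
        (Set.image_mono (Set.inter_subset_inter_right S' (Set.Ici_subset_Ici.2 hst)))
    · next h =>
      split
      · next h2 =>
        obtain ⟨u, hu⟩ := hne s h2
        exact le_trans (hGL u hu.1) (le_csSup (hbdd s) ⟨u, hu, rfl⟩)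
      · exact le_refl L
  set K : ℝ → ℝ := fun t => g₀ - Gb t with hK
  have hKmono : Monotone K := fun a b hab => sub_le_sub_left (hGbanti hab) g₀
  have hKmeas : Measurable K := hKmono.measurable
  have hK0 : ∀ t, t < T → 0 ≤ K t := fun t ht => sub_nonneg.2 (hGbg0 t ht)
  set B : ℝ := max 1 (g₀ - L) with hB
  have hB0 : 0 < B := lt_of_lt_of_le one_pos (le_max_left _ _)
  have hKB : ∀ t, K t ≤ B := fun t =>
    le_trans (sub_le_sub_left (hGbL t) g₀) (le_max_right _ _)
  -- E1: Fubini for the primitive term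
  set μI := volume.restrict I with hμI
  set Φ₁ : ℝ × ℝ → ℝ :=
    fun p => Set.indicator {q : ℝ × ℝ | q.2 < q.1} (fun q => deriv φ q.1 * f q.2) p with hΦ₁
  have hltmeas : MeasurableSet {q : ℝ × ℝ | q.2 < q.1} :=
    measurableSet_lt measurable_snd measurable_fst
  have hΦ₁m : AEStronglyMeasurable Φ₁ (μI.prod μI) :=
    ((hφd.aestronglyMeasurable.comp_fst).mul (hf.aestronglyMeasurable.comp_snd)).indicator hltmeas
  have hmemI : ∀ᵐ p ∂(μI.prod μI), p ∈ I ×ˢ I := by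
    rw [hμI, Measure.prod_restrict]
    exact ae_restrict_mem (hIm.prod hIm)
  have hΦ₁i : Integrable Φ₁ (μI.prod μI) := by
    refine Integrable.mono' ((integrable_const C).mul_prod habs) hΦ₁m ?_
    filter_upwards [hmemI] with p hp
    simp only [hΦ₁]
    by_cases hlt : p ∈ {q : ℝ × ℝ | q.2 < q.1}
    · rw [Set.indicator_of_mem hlt, Real.norm_eq_abs, abs_mul]
      exact mul_le_mul_of_nonneg_right (hC p.1 ⟨hp.1.1.le, hp.1.2.le⟩) (abs_nonneg _)
    · rw [Set.indicator_of_notMem hlt]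
      simpa using mul_nonneg hC0 (abs_nonneg (f p.2))
  have hinner1 : ∀ t ∈ I, deriv φ t * F t = ∫ τ in I, Φ₁ (t, τ) := by
    intro t ht
    have he : (fun τ => Φ₁ (t, τ)) =
        Set.indicator (Set.Iio t) (fun τ => deriv φ t * f τ) := by
      funext τ
      simp only [hΦ₁, Set.indicator_apply, Set.mem_setOf_eq, Set.mem_Iio]
    rw [he, integral_indicator measurableSet_Iio,
      Measure.restrict_restrict measurableSet_Iio]
    have hIi : Set.Iio t ∩ I = Set.Ioo 0 t := by
      ext x
      simp only [Set.mem_inter_iff, Set.mem_Iio, hIdef, Set.mem_Ioo]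
      constructor
      · rintro ⟨h1, h2, h3⟩; exact ⟨h2, h1⟩
      · rintro ⟨h1, h2⟩; exact ⟨h2, h1, h2.trans ht.2⟩
    rw [hIi, integral_const_mul]
  have hswap1 : ∫ t in I, (∫ τ in I, Φ₁ (t, τ)) = ∫ τ in I, (∫ t in I, Φ₁ (t, τ)) :=
    integral_integral_swap hΦ₁i
  have hinner2 : ∀ τ ∈ I, (∫ t in I, Φ₁ (t, τ)) = -(φ τ * f τ) := by
    intro τ hτ
    have he : (fun t => Φ₁ (t, τ)) =
        Set.indicator (Set.Ioi τ) (fun t => deriv φ t * f τ) := by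
      funext t
      simp only [hΦ₁, Set.indicator_apply, Set.mem_setOf_eq, Set.mem_Ioi]
    rw [he, integral_indicator measurableSet_Ioi,
      Measure.restrict_restrict measurableSet_Ioi]
    have hIi : Set.Ioi τ ∩ I = Set.Ioo τ T := by
      ext x
      simp only [Set.mem_inter_iff, Set.mem_Ioi, hIdef, Set.mem_Ioo]
      constructor
      · rintro ⟨h1, h2, h3⟩; exact ⟨h1, h3⟩
      · rintro ⟨h1, h2⟩; exact ⟨h1, hτ.1.trans h1, h2⟩
    rw [hIi, integral_mul_const, aux_ftc hφ hτ.2.le, hφT]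
    ring
  have hE1 : ∫ t in I, deriv φ t * F t = -∫ τ in I, φ τ * f τ := by
    rw [setIntegral_congr_fun hIm (fun t ht => hinner1 t ht), hswap1,
      setIntegral_congr_fun hIm (fun τ hτ => hinner2 τ hτ), integral_neg]
  have hintφF : Integrable (fun t => deriv φ t * F t) μI := by
    refine (hΦ₁i.integral_prod_left).congr ?_
    filter_upwards [ae_restrict_mem hIm] with t ht
    exact (hinner1 t ht).symm
  -- integrability of the pieces on I
  have hintg : Integrable (fun t => deriv φ t * g t) μI := by
    refine Integrable.mono' (integrable_const (C * M)) (hφd.aestronglyMeasurable.mul hgm) ?_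
    filter_upwards [hgb, ae_restrict_mem hIm] with t h1 h2
    rw [Real.norm_eq_abs, abs_mul]
    exact mul_le_mul (hC t ⟨h2.1.le, h2.2.le⟩) h1 (abs_nonneg _) hC0
  have hintK : Integrable (fun t => deriv φ t * K t) μI := by
    refine Integrable.mono' (integrable_const (C * B))
      (hφd.aestronglyMeasurable.mul hKmeas.aestronglyMeasurable) ?_
    filter_upwards [ae_restrict_mem hIm] with t ht
    rw [Real.norm_eq_abs, abs_mul]
    have h1 : |K t| = K t := abs_of_nonneg (hK0 t ht.2)
    rw [h1]
    exact mul_le_mul (hC t ⟨ht.1.le, ht.2.le⟩) (hKB t) (hK0 t ht.2) hC0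
  have hintc : Integrable (fun t => deriv φ t * g₀) μI := by
    refine Integrable.mono' (integrable_const (C * |g₀|))
      ((hφd.mul continuous_const).aestronglyMeasurable) ?_
    filter_upwards [ae_restrict_mem hIm] with t ht
    rw [Real.norm_eq_abs, abs_mul]
    exact mul_le_mul_of_nonneg_right (hC t ⟨ht.1.le, ht.2.le⟩) (abs_nonneg _)
  -- split ∫ φ' G
  have hGsplit : ∫ t in I, deriv φ t * G t
      = (∫ t in I, deriv φ t * g t) + ∫ t in I, deriv φ t * F t := by
    rw [← integral_add hintg hintφF]
    apply integral_congr_ae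
    filter_upwards with t
    simp only [hG]
    ring
  -- replace G by its antitone envelope
  have hGGb : ∫ t in I, deriv φ t * G t = ∫ t in I, deriv φ t * Gb t := by
    apply integral_congr_ae
    filter_upwards [hS'ae] with t ht
    rw [hGbval t ht]
  -- expand via K
  have hGbK : ∫ t in I, deriv φ t * Gb t
      = -(φ 0 * g₀) - ∫ t in I, deriv φ t * K t := by
    have he : ∀ t : ℝ, deriv φ t * Gb t = deriv φ t * g₀ - deriv φ t * K t := by
      intro t; simp only [hK]; ring
    calc ∫ t in I, deriv φ t * Gb t
        = ∫ t in I, (deriv φ t * g₀ - deriv φ t * K t) := by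
          apply integral_congr_ae; filter_upwards with t; exact he t
      _ = (∫ t in I, deriv φ t * g₀) - ∫ t in I, deriv φ t * K t :=
          integral_sub hintc hintK
      _ = -(φ 0 * g₀) - ∫ t in I, deriv φ t * K t := by
          rw [integral_mul_const, aux_ftc hφ hT.le, hφT]; ring
  -- layer cake: ∫ φ' K ≤ 0
  set J : Set ℝ := Set.Ioo 0 B with hJ
  have hJm : MeasurableSet J := measurableSet_Ioo
  haveI hJfin : IsFiniteMeasure (volume.restrict J) :=
    ⟨by rw [Measure.restrict_apply_univ]; simp [hJ, Real.volume_Ioo]⟩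
  set Φ₂ : ℝ × ℝ → ℝ :=
    fun p => Set.indicator {q : ℝ × ℝ | q.2 < K q.1} (fun q => deriv φ q.1) p with hΦ₂
  have hsm : MeasurableSet {q : ℝ × ℝ | q.2 < K q.1} :=
    measurableSet_lt measurable_snd (hKmeas.comp measurable_fst)
  have hΦ₂m : AEStronglyMeasurable Φ₂ (μI.prod (volume.restrict J)) :=
    (hφd.aestronglyMeasurable.comp_fst).indicator hsm
  have hmemIJ : ∀ᵐ p ∂(μI.prod (volume.restrict J)), p ∈ I ×ˢ J := by
    rw [hμI, Measure.prod_restrict]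
    exact ae_restrict_mem (hIm.prod hJm)
  have hΦ₂i : Integrable Φ₂ (μI.prod (volume.restrict J)) := by
    refine Integrable.mono' (integrable_const C) hΦ₂m ?_
    filter_upwards [hmemIJ] with p hp
    simp only [hΦ₂]
    by_cases hlt : p ∈ {q : ℝ × ℝ | q.2 < K q.1}
    · rw [Set.indicator_of_mem hlt, Real.norm_eq_abs]
      exact hC p.1 ⟨hp.1.1.le, hp.1.2.le⟩
    · rw [Set.indicator_of_notMem hlt]
      simpa using hC0
  have hinnerK : ∀ t ∈ I, deriv φ t * K t = ∫ lam in J, Φ₂ (t, lam) := by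
    intro t ht
    have he : (fun lam => Φ₂ (t, lam)) =
        Set.indicator (Set.Iio (K t)) (fun _ => deriv φ t) := by
      funext lam
      simp only [hΦ₂, Set.indicator_apply, Set.mem_setOf_eq, Set.mem_Iio]
    rw [he, integral_indicator measurableSet_Iio,
      Measure.restrict_restrict measurableSet_Iio]
    have hJI : Set.Iio (K t) ∩ J = Set.Ioo 0 (K t) := by
      ext x
      simp only [Set.mem_inter_iff, Set.mem_Iio, hJ, Set.mem_Ioo]
      constructor
      · rintro ⟨h1, h2, h3⟩; exact ⟨h2, h1⟩
      · rintro ⟨h1, h2⟩; exact ⟨h2, h1, h2.trans_le (hKB t)⟩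
    rw [hJI, setIntegral_const, measureReal_def, Real.volume_Ioo, smul_eq_mul,
      ENNReal.toReal_ofReal (by linarith [hK0 t ht.2])]
    ring
  have hswapK : ∫ t in I, (∫ lam in J, Φ₂ (t, lam)) = ∫ lam in J, (∫ t in I, Φ₂ (t, lam)) :=
    integral_integral_swap hΦ₂i
  have hinnerK2 : ∀ lam, 0 < lam → (∫ t in I, Φ₂ (t, lam)) ≤ 0 := by
    intro lam hlam
    have he : (fun t => Φ₂ (t, lam)) =
        Set.indicator (K ⁻¹' Set.Ioi lam) (deriv φ) := by
      funext t
      by_cases h : lam < K t <;>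
        simp [hΦ₂, Set.indicator_apply, Set.mem_setOf_eq, Set.mem_preimage, Set.mem_Ioi, h]
    rw [he, integral_indicator (hKmeas measurableSet_Ioi),
      Measure.restrict_restrict (hKmeas measurableSet_Ioi)]
    apply aux_upper hφ hφ0 hφT
    · intro x hx; exact hx.2
    · rintro t ⟨ht1, ht2⟩ t' htt' ht'T
      exact ⟨lt_of_lt_of_le ht1 (hKmono htt'.le), ⟨ht2.1.trans htt', ht'T⟩⟩
  have hEK : ∫ t in I, deriv φ t * K t ≤ 0 := by
    rw [setIntegral_congr_fun hIm (fun t ht => hinnerK t ht), hswapK]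
    apply integral_nonpos_of_ae
    filter_upwards [ae_restrict_mem hJm] with lam hlam
    exact hinnerK2 lam hlam.1
  -- assemble
  have hfinal : ∫ t in I, deriv φ t * g t
      = -(φ 0 * g₀) - (∫ t in I, deriv φ t * K t) - (∫ t in I, deriv φ t * F t) := by
    have := hGsplit
    rw [hGGb, hGbK] at this
    linarith
  simp only [hμI]
  rw [hfinal, hE1]
  linarith
end

section
/- Let g : [0,T] → ℝ satisfy g(t) − g(s) + ∫ₛᵗ f(τ) dτ ≤ 0 for a.e. s < t with f ∈ L¹(0,T). Then the function t ↦ g(t) + ∫₀ᵗ f(τ) dτ is a.e. equal to a non-increasing function; in particular g has a representative which is the sum of a non-increasing function and a continuous function, hence admits a càdlàg representative. -/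
open MeasureTheory

/-- If `g(t) - g(s) + ∫ₛᵗ f ≤ 0` for a.e. `s < t` with `f ∈ L¹(0,T)`, then
`t ↦ g(t) + ∫₀ᵗ f` agrees a.e. with a non-increasing function; in particular `g` admits a
representative which is the sum of a non-increasing and a continuous function, hence a
càdlàg representative. -/
theorem stmt8 (T : ℝ) (hT : 0 < T) (f g : ℝ → ℝ)
    (hf : IntegrableOn f (Set.Ioo 0 T))
    (S : Set ℝ) (hS : S ⊆ Set.Ioo 0 T) (hSfull : volume (Set.Ioo 0 T \ S) = 0)
    (hineq : ∀ s ∈ S, ∀ t ∈ S, s < t → g t - g s + ∫ τ in Set.Ioo s t, f τ ≤ 0) :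
    (∃ G : ℝ → ℝ, AntitoneOn G (Set.Ioo 0 T) ∧
      ∀ᵐ t ∂(volume.restrict (Set.Ioo 0 T)), g t + (∫ τ in Set.Ioo 0 t, f τ) = G t) ∧
    (∃ gt : ℝ → ℝ, (∀ᵐ t ∂(volume.restrict (Set.Ioo 0 T)), gt t = g t) ∧
      (∀ t ∈ Set.Ioo 0 T, Filter.Tendsto gt (nhdsWithin t (Set.Ioi t)) (nhds (gt t))) ∧
      (∀ t ∈ Set.Ioo 0 T, ∃ L, Filter.Tendsto gt (nhdsWithin t (Set.Iio t)) (nhds L))) := by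
  classical
  -- density of `S` in subintervals
  have hdense : ∀ a b : ℝ, 0 ≤ a → a < b → b ≤ T → (S ∩ Set.Ioo a b).Nonempty := by
    intro a b ha hab hbT
    by_contra hemp
    rw [Set.not_nonempty_iff_eq_empty] at hemp
    have hsub : Set.Ioo a b ⊆ Set.Ioo 0 T \ S := by
      intro x hx
      refine ⟨⟨lt_of_le_of_lt ha hx.1, lt_of_lt_of_le hx.2 hbT⟩, fun hxS => ?_⟩
      exact Set.eq_empty_iff_forall_notMem.1 hemp x ⟨hxS, hx⟩
    have hm := measure_mono (μ := volume) hsub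
    rw [hSfull, nonpos_iff_eq_zero, Real.volume_Ioo, ENNReal.ofReal_eq_zero] at hm
    linarith
  set h : ℝ → ℝ := fun t => g t + ∫ τ in Set.Ioo 0 t, f τ with hhdef
  -- additivity of the integral
  have hadd : ∀ s t : ℝ, 0 < s → s ≤ t → t < T →
      (∫ τ in Set.Ioo 0 t, f τ) = (∫ τ in Set.Ioo 0 s, f τ) + ∫ τ in Set.Ioo s t, f τ := by
    intro s t hs hst htT
    have h1 : IntegrableOn f (Set.Ioc 0 s) :=
      hf.mono_set (fun x hx => ⟨hx.1, lt_of_le_of_lt (hx.2.trans hst) htT⟩)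
    have h2 : IntegrableOn f (Set.Ioc s t) :=
      hf.mono_set (fun x hx => ⟨hs.trans hx.1, lt_of_le_of_lt hx.2 htT⟩)
    calc (∫ τ in Set.Ioo 0 t, f τ) = ∫ τ in Set.Ioc 0 t, f τ :=
          setIntegral_congr_set Ioo_ae_eq_Ioc
      _ = ∫ τ in Set.Ioc 0 s ∪ Set.Ioc s t, f τ := by
          rw [Set.Ioc_union_Ioc_eq_Ioc hs.le hst]
      _ = (∫ τ in Set.Ioc 0 s, f τ) + ∫ τ in Set.Ioc s t, f τ :=
          setIntegral_union (Set.Ioc_disjoint_Ioc_of_le le_rfl) measurableSet_Ioc h1 h2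
      _ = (∫ τ in Set.Ioo 0 s, f τ) + ∫ τ in Set.Ioo s t, f τ := by
          rw [setIntegral_congr_set Ioo_ae_eq_Ioc, setIntegral_congr_set Ioo_ae_eq_Ioc]
  -- h is antitone on S
  have hmono : ∀ s ∈ S, ∀ t ∈ S, s ≤ t → h t ≤ h s := by
    intro s hsS t htS hst
    rcases eq_or_lt_of_le hst with rfl | hlt
    · exact le_rfl
    · have := hineq s hsS t htS hlt
      have hI := hadd s t (hS hsS).1 hst (hS htS).2
      simp only [hhdef]
      linarith
  -- boundedness and nonemptiness of the sup sets
  have hne' : ∀ t ∈ Set.Ioo 0 T, (S ∩ Set.Ioi t).Nonempty := by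
    intro t ht
    obtain ⟨x, hx1, hx2⟩ := hdense t T (le_of_lt ht.1) ht.2 le_rfl
    exact ⟨x, hx1, hx2.1⟩
  have hne : ∀ t ∈ Set.Ioo 0 T, (S ∩ Set.Ici t).Nonempty := by
    intro t ht
    obtain ⟨x, hx1, hx2⟩ := hne' t ht
    exact ⟨x, hx1, Set.mem_Ici.2 (le_of_lt hx2)⟩
  have hbdd : ∀ t ∈ Set.Ioo 0 T, BddAbove (h '' (S ∩ Set.Ici t)) := by
    intro t ht
    obtain ⟨s0, hs0S, hs0⟩ := hdense 0 t le_rfl ht.1 ht.2.le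
    refine ⟨h s0, fun y hy => ?_⟩
    obtain ⟨s, ⟨hsS, hst⟩, rfl⟩ := hy
    exact hmono s0 hs0S s hsS (hs0.2.le.trans hst)
  have hbdd' : ∀ t ∈ Set.Ioo 0 T, BddAbove (h '' (S ∩ Set.Ioi t)) := by
    intro t ht
    exact (hbdd t ht).mono (Set.image_mono (Set.inter_subset_inter_right _ Set.Ioi_subset_Ici_self))
  set G : ℝ → ℝ := fun t => sSup (h '' (S ∩ Set.Ici t)) with hGdef
  set G' : ℝ → ℝ := fun t => sSup (h '' (S ∩ Set.Ioi t)) with hG'def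
  have hGanti : AntitoneOn G (Set.Ioo 0 T) := by
    intro t1 ht1 t2 ht2 h12
    exact csSup_le_csSup (hbdd t1 ht1) ((hne t2 ht2).image h)
      (Set.image_mono (Set.inter_subset_inter_right _ (Set.Ici_subset_Ici.2 h12)))
  have hG'anti : AntitoneOn G' (Set.Ioo 0 T) := by
    intro t1 ht1 t2 ht2 h12
    exact csSup_le_csSup (hbdd' t1 ht1) ((hne' t2 ht2).image h)
      (Set.image_mono (Set.inter_subset_inter_right _ (Set.Ioi_subset_Ioi h12)))
  have hGh : ∀ t ∈ S, G t = h t := by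
    intro t htS
    apply le_antisymm
    · apply csSup_le ((hne t (hS htS)).image h)
      rintro y ⟨s, ⟨hsS, hst⟩, rfl⟩
      exact hmono t htS s hsS hst
    · exact le_csSup (hbdd t (hS htS)) ⟨t, ⟨htS, Set.self_mem_Ici⟩, rfl⟩
  have hG'le : ∀ t ∈ Set.Ioo 0 T, G' t ≤ G t := by
    intro t ht
    exact csSup_le_csSup (hbdd t ht) ((hne' t ht).image h)
      (Set.image_mono (Set.inter_subset_inter_right _ Set.Ioi_subset_Ici_self))
  have hGleG' : ∀ t1 ∈ Set.Ioo 0 T, ∀ t2 ∈ Set.Ioo 0 T, t1 < t2 → G t2 ≤ G' t1 := by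
    intro t1 ht1 t2 ht2 h12
    apply csSup_le ((hne t2 ht2).image h)
    rintro y ⟨s, ⟨hsS, hst⟩, rfl⟩
    exact le_csSup (hbdd' t1 ht1) ⟨s, ⟨hsS, lt_of_lt_of_le h12 hst⟩, rfl⟩
  -- the primitive
  have hf' : Integrable (Set.indicator (Set.Ioo 0 T) f) volume :=
    (integrable_indicator_iff measurableSet_Ioo).2 hf
  set F : ℝ → ℝ := fun t => ∫ x in (0:ℝ)..t, Set.indicator (Set.Ioo 0 T) f x with hFdef
  have hFc : Continuous F := hf'.continuous_primitive 0
  have hIF : ∀ t ∈ Set.Ioo 0 T, F t = ∫ τ in Set.Ioo 0 t, f τ := by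
    intro t ht
    simp only [hFdef]
    rw [intervalIntegral.integral_of_le ht.1.le,
      ← setIntegral_congr_set Ioo_ae_eq_Ioc, setIntegral_indicator measurableSet_Ioo,
      Set.inter_eq_left.2 (Set.Ioo_subset_Ioo_right ht.2.le)]
  -- first conjunct
  have hSae : ∀ᵐ t ∂(volume.restrict (Set.Ioo 0 T)), t ∈ S := by
    rw [ae_iff, Measure.restrict_apply' measurableSet_Ioo]
    refine measure_mono_null (fun x hx => ?_) hSfull
    exact ⟨hx.2, hx.1⟩
  constructor
  · refine ⟨G, hGanti, ?_⟩
    filter_upwards [hSae] with t htS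
    exact (hGh t htS).symm
  -- second conjunct
  · -- bad set is countable
    set B : Set ℝ := {t | t ∈ Set.Ioo 0 T ∧ G' t ≠ G t} with hBdef
    have hBc : B.Countable := by
      have key : ∀ t : ℝ, ∃ q : ℚ, t ∈ B → (G' t < (q : ℝ) ∧ (q : ℝ) < G t) := by
        intro t
        by_cases htB : t ∈ B
        · obtain ⟨q, hq1, hq2⟩ := exists_rat_btwn (lt_of_le_of_ne (hG'le t htB.1) htB.2)
          exact ⟨q, fun _ => ⟨hq1, hq2⟩⟩
        · exact ⟨0, fun ht => absurd ht htB⟩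
      choose q hq using key
      have hqlt : ∀ t1 ∈ B, ∀ t2 ∈ B, t1 < t2 → (q t2 : ℝ) < (q t1 : ℝ) := by
        intro t1 ht1 t2 ht2 h12
        calc (q t2 : ℝ) < G t2 := (hq t2 ht2).2
          _ ≤ G' t1 := hGleG' t1 ht1.1 t2 ht2.1 h12
          _ < q t1 := (hq t1 ht1).1
      rw [Set.countable_iff_exists_injOn]
      refine ⟨fun t => Encodable.encode (q t), fun t1 ht1 t2 ht2 heq => ?_⟩
      have hq12 : q t1 = q t2 := Encodable.encode_injective heq
      rcases lt_trichotomy t1 t2 with hlt | heq' | hlt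
      · exact absurd (hqlt t1 ht1 t2 ht2 hlt) (by rw [hq12]; exact lt_irrefl _)
      · exact heq'
      · exact absurd (hqlt t2 ht2 t1 ht1 hlt) (by rw [hq12]; exact lt_irrefl _)
    have hBae : ∀ᵐ t ∂(volume.restrict (Set.Ioo 0 T)), t ∉ B := by
      have h0 : volume.restrict (Set.Ioo 0 T) B = 0 := by
        rw [Measure.restrict_apply' measurableSet_Ioo]
        exact measure_mono_null Set.inter_subset_left (hBc.measure_zero volume)
      rw [ae_iff]
      simp only [not_not]
      exact h0
    refine ⟨fun u => G' u - F u, ?_, ?_, ?_⟩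
    · filter_upwards [hSae, hBae] with t htS htB
      have ht : t ∈ Set.Ioo 0 T := hS htS
      have hGG' : G' t = G t := by
        by_contra hne''
        exact htB ⟨ht, hne''⟩
      rw [hGG', hGh t htS, hIF t ht]
      simp [hhdef]
    · -- right continuity
      intro t ht
      have hG'rc : Filter.Tendsto G' (nhdsWithin t (Set.Ioi t)) (nhds (G' t)) := by
        rw [Metric.tendsto_nhdsWithin_nhds]
        intro ε hε
        obtain ⟨y, hyA, hy⟩ := exists_lt_of_lt_csSup ((hne' t ht).image h)
          (sub_lt_self (G' t) hε)
        obtain ⟨s, ⟨hsS, hst⟩, rfl⟩ := hyA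
        refine ⟨s - t, sub_pos.2 hst, fun u hu hdu => ?_⟩
        have hut : t < u := hu
        have hus : u < s := by
          rw [Real.dist_eq, abs_of_pos (sub_pos.2 hut)] at hdu
          linarith
        have huT : u ∈ Set.Ioo 0 T := ⟨ht.1.trans hut, hus.trans (hS hsS).2⟩
        have h1 : h s ≤ G' u := le_csSup (hbdd' u huT) ⟨s, ⟨hsS, hus⟩, rfl⟩
        have h2 : G' u ≤ G' t := hG'anti ht huT hut.le
        rw [Real.dist_eq, abs_lt]
        constructor <;> linarith
      have hFt : Filter.Tendsto F (nhdsWithin t (Set.Ioi t)) (nhds (F t)) :=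
        (hFc.tendsto t).mono_left nhdsWithin_le_nhds
      exact hG'rc.sub hFt
    · -- left limits
      intro t ht
      have hbb : BddBelow (G' '' Set.Ioo 0 t) := by
        refine ⟨G' t, fun y hy => ?_⟩
        obtain ⟨u, hu, rfl⟩ := hy
        exact hG'anti ⟨hu.1, hu.2.trans ht.2⟩ ht hu.2.le
      have hnel : (G' '' Set.Ioo 0 t).Nonempty :=
        ⟨G' (t/2), ⟨t/2, ⟨by linarith [ht.1], by linarith [ht.1]⟩, rfl⟩⟩
      set L := sInf (G' '' Set.Ioo 0 t) with hLdef
      have hG'll : Filter.Tendsto G' (nhdsWithin t (Set.Iio t)) (nhds L) := by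
        rw [Metric.tendsto_nhdsWithin_nhds]
        intro ε hε
        obtain ⟨y, hyA, hy⟩ := exists_lt_of_csInf_lt hnel (lt_add_of_pos_right L hε)
        obtain ⟨u0, hu0, rfl⟩ := hyA
        refine ⟨t - u0, by linarith [hu0.2], fun u hu hdu => ?_⟩
        have hut : u < t := hu
        have hu0u : u0 < u := by
          rw [Real.dist_eq, abs_of_neg (sub_neg.2 hut)] at hdu
          linarith
        have huT : u ∈ Set.Ioo 0 T := ⟨hu0.1.trans hu0u, hut.trans ht.2⟩
        have h1 : G' u ≤ G' u0 := hG'anti ⟨hu0.1, hu0.2.trans ht.2⟩ huT hu0u.le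
        have h2 : L ≤ G' u := csInf_le hbb ⟨u, ⟨hu0.1.trans hu0u, hut⟩, rfl⟩
        rw [Real.dist_eq, abs_lt]
        constructor <;> linarith
      have hFt : Filter.Tendsto F (nhdsWithin t (Set.Iio t)) (nhds (F t)) :=
        (hFc.tendsto t).mono_left nhdsWithin_le_nhds
      exact ⟨L - F t, hG'll.sub hFt⟩
end
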